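/- Let (A,·) be the semigroup K-algebra of the rectangular band I×J and let * be an associative bilinear product on A that is (12)-matching with ·. Then e_{ij} * e_{kl} = e_{il} * e_{il} for all (i,j),(k,l) ∈ I×J. -/

import Mathlib

/-- For the semigroup algebra `(A, ·)` of the rectangular band `I × J` over a field `K`
and an associative bilinear product `*` on `A` that is `(12)`-matching with `·`, one has
`e_{ij} * e_{kl} = e_{il} * e_{il}` for all `(i,j), (k,l) ∈ I × J`. -/
theorem twelve_matching_rectangular_band_basis_products {K A I J : Type*} [Field K]
    [NonUnitalRing A] [Module K A] [SMulCommClass K A A] [IsScalarTower K A A]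
    [Nonempty I] [Nonempty J]
    (e : Module.Basis (I × J) K A)
    (hmul : ∀ (i k : I) (j l : J), e (i, j) * e (k, l) = e (i, l))
    (star : A →ₗ[K] A →ₗ[K] A)
    (hassoc : ∀ a b c : A, star (star a b) c = star a (star b c))
    (hmatch1 : ∀ a b c : A, star a b * c = a * star b c)
    (hmatch2 : ∀ a b c : A, star (a * b) c = star a (b * c)) :
    ∀ (i k : I) (j l : J),
      star (e (i, j)) (e (k, l)) = star (e (i, l)) (e (i, l)) := by
  intro i k j l
  calc star (e (i, j)) (e (k, l))
      = star (e (i, j) * e (i, j)) (e (k, l)) := by rw [hmul]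
    _ = star (e (i, j)) (e (i, j) * e (k, l)) := hmatch2 _ _ _
    _ = star (e (i, j)) (e (i, l)) := by rw [hmul]
    _ = star (e (i, j)) (e (i, l) * e (i, l)) := by rw [hmul]
    _ = star (e (i, j) * e (i, l)) (e (i, l)) := (hmatch2 _ _ _).symm
    _ = star (e (i, l)) (e (i, l)) := by rw [hmul]
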